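/- Let 𝓗 be a finite hypergraph on a finite set V, let w ∉ V, and let 𝓗* = {H ∪ {w} : H ∈ 𝓗}, a hypergraph on V ∪ {w}. Define the position x ∈ ℕ^{V∪{w}} by x_i = 1 for i ∈ V and x_w = |𝓗|. Then 𝓗* is an intersecting hypergraph (any two of its hyperedges intersect) and 𝓣_{𝓗*}(x) = μ(𝓗), the matching number of 𝓗. -/

import Mathlib

/-- The minimum excludant of a set of natural numbers. -/
noncomputable def mex (S : Set ℕ) : ℕ := sInf {n : ℕ | n ∉ S}

open Classical in
/-- The Sprague–Grundy function of the impartial game with move relation `move`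
(meaningful when every play is finite, i.e. the reversed move relation is
well-founded): it satisfies `sgFun move x = mex {sgFun move y | move x y}`. -/
noncomputable def sgFun {X : Type*} (move : X → X → Prop) : X → ℕ :=
  if hwf : WellFounded (fun y x => move x y) then
    hwf.fix (fun x ih => mex {v : ℕ | ∃ (y : X) (h : move x y), ih y h = v})
  else fun _ => 0

open Classical in
/-- The Tetris function: the length of a longest play starting at `x`
(meaningful when every play is finite and the game is finitely branching):
it satisfies `tetrisFun move x = sup {tetrisFun move y + 1 | move x y}`. -/
noncomputable def tetrisFun {X : Type*} (move : X → X → Prop) : X → ℕ :=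
  if hwf : WellFounded (fun y x => move x y) then
    hwf.fix (fun x ih => sSup {v : ℕ | ∃ (y : X) (h : move x y), v = ih y h + 1})
  else fun _ => 0

/-- A game is SG decreasing if every move strictly decreases the SG value. -/
def SGDecreasing {X : Type*} (move : X → X → Prop) : Prop :=
  ∀ x y, move x y → sgFun move y < sgFun move x

/-- The move relation of the game `NIM_𝓗` on positions `ℕ^V`. -/
def nimMove {V : Type*} (𝓗 : Set (Finset V)) (x x' : V → ℕ) : Prop :=
  ∃ H ∈ 𝓗, (∀ i ∈ H, x' i < x i) ∧ ∀ i ∉ H, x' i = x i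

/-- A hypergraph is Tetris if `NIM_𝓗` is SG decreasing. -/
def IsTetrisHypergraph {V : Type*} (𝓗 : Set (Finset V)) : Prop :=
  SGDecreasing (nimMove 𝓗)

/-- The move relation of the `𝓗`-combination of the games `move i`. -/
def combMove {V : Type*} {X : V → Type*} (𝓗 : Set (Finset V))
    (move : ∀ i, X i → X i → Prop) (x x' : ∀ i, X i) : Prop :=
  ∃ H ∈ 𝓗, (∀ i ∈ H, move i (x i) (x' i)) ∧ ∀ i ∉ H, x' i = x i

/-- Condition (*): every nonempty induced subhypergraph has a hyperedge
intersecting all its hyperedges. -/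
def CondStar {V : Type*} [DecidableEq V] (𝓗 : Set (Finset V)) : Prop :=
  ∀ S : Finset V, (∃ H ∈ 𝓗, H ⊆ S) →
    ∃ H ∈ 𝓗, H ⊆ S ∧ ∀ H' ∈ 𝓗, H' ⊆ S → (H ∩ H').Nonempty

/-- The matching number of a hypergraph: the maximum number of pairwise
disjoint hyperedges. -/
noncomputable def matchingNumber {V : Type*} (𝓗 : Set (Finset V)) : ℕ :=
  sSup {k : ℕ | ∃ M : Finset (Finset V), (↑M : Set (Finset V)) ⊆ 𝓗 ∧
    (↑M : Set (Finset V)).Pairwise (fun H H' => Disjoint H H') ∧ M.card = k}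

/- ### Auxiliary material -/

lemma nat_sSup_le {S : Set ℕ} {n : ℕ} (h : ∀ v ∈ S, v ≤ n) : sSup S ≤ n := by
  rcases Set.eq_empty_or_nonempty S with he | hne
  · rw [he, csSup_empty]; exact Nat.zero_le _
  · exact csSup_le hne h

lemma tetrisFun_eq {X : Type*} (move : X → X → Prop)
    (hwf : WellFounded (fun y x => move x y)) (x : X) :
    tetrisFun move x
      = sSup {v : ℕ | ∃ (y : X) (_ : move x y), v = tetrisFun move y + 1} := by
  have h : tetrisFun move = hwf.fix
      (fun x ih => sSup {v : ℕ | ∃ (y : X) (h : move x y), v = ih y h + 1}) := by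
    unfold tetrisFun
    rw [dif_pos hwf]
  conv_lhs => rw [h, hwf.fix_eq]
  rw [h]

section Star

variable {V : Type*} [Fintype V] [DecidableEq V]

/-- The starred hypergraph. -/
def starE (𝓗 : Finset (Finset V)) : Set (Finset (Option V)) :=
  {E : Finset (Option V) | ∃ H ∈ 𝓗, E = insert none (H.image some)}

lemma move_none_lt (𝓗 : Finset (Finset V)) {x y : Option V → ℕ}
    (h : nimMove (starE 𝓗) x y) : y none < x none := by
  obtain ⟨E, ⟨H, _, rfl⟩, hlt, _⟩ := h
  exact hlt none (Finset.mem_insert_self _ _)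

lemma star_wf (𝓗 : Finset (Finset V)) :
    WellFounded (fun y x => nimMove (starE 𝓗) x y) := by
  have h1 := InvImage.wf (fun x : Option V → ℕ => x none) Nat.lt_wfRel.wf
  exact Subrelation.wf (fun {y x} h => move_none_lt 𝓗 h) h1

lemma tetris_le_none (𝓗 : Finset (Finset V)) (x : Option V → ℕ) :
    tetrisFun (nimMove (starE 𝓗)) x ≤ x none := by
  refine (star_wf 𝓗).induction
    (C := fun x => tetrisFun (nimMove (starE 𝓗)) x ≤ x none) x ?_
  intro x ih
  rw [tetrisFun_eq _ (star_wf 𝓗)]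
  refine nat_sSup_le ?_
  rintro v ⟨y, hm, rfl⟩
  have h1 := ih y hm
  have h2 := move_none_lt 𝓗 hm
  omega

lemma tetris_succ_le (𝓗 : Finset (Finset V)) {x y : Option V → ℕ}
    (h : nimMove (starE 𝓗) x y) :
    tetrisFun (nimMove (starE 𝓗)) y + 1 ≤ tetrisFun (nimMove (starE 𝓗)) x := by
  conv_rhs => rw [tetrisFun_eq _ (star_wf 𝓗)]
  have hb : BddAbove {v : ℕ | ∃ (z : Option V → ℕ) (_ : nimMove (starE 𝓗) x z),
      v = tetrisFun (nimMove (starE 𝓗)) z + 1} := by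
    refine ⟨x none, ?_⟩
    rintro v ⟨z, hz, rfl⟩
    have h1 := tetris_le_none 𝓗 z
    have h2 := move_none_lt 𝓗 hz
    omega
  exact le_csSup hb ⟨y, h, rfl⟩

/-- The set of matching sizes. -/
def msizes (S : Set (Finset V)) : Set ℕ :=
  {k : ℕ | ∃ M : Finset (Finset V), (↑M : Set (Finset V)) ⊆ S ∧
    (↑M : Set (Finset V)).Pairwise (fun H H' => Disjoint H H') ∧ M.card = k}

lemma matchingNumber_eq (S : Set (Finset V)) :
    matchingNumber S = sSup (msizes S) := rfl

lemma msizes_zero (S : Set (Finset V)) : 0 ∈ msizes S :=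
  ⟨∅, by simp, by simp, rfl⟩

lemma msizes_bdd (S : Set (Finset V)) : BddAbove (msizes S) := by
  refine ⟨Fintype.card (Finset V), ?_⟩
  rintro k ⟨M, _, _, rfl⟩
  exact Finset.card_le_univ M

lemma matching_step (S S' : Set (Finset V)) (H : Finset V) (hH : H ∈ S')
    (hHne : H.Nonempty) (hdis : ∀ H' ∈ S, Disjoint H H') (hsub : S ⊆ S') :
    matchingNumber S + 1 ≤ matchingNumber S' := by
  obtain ⟨M, hMsub, hMpair, hMcard⟩ :=
    Nat.sSup_mem ⟨0, msizes_zero S⟩ (msizes_bdd S)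
  have hHM : H ∉ M := by
    intro hmem
    exact hHne.ne_empty (by simpa using disjoint_self.mp (hdis H (hMsub hmem)))
  rw [matchingNumber_eq, matchingNumber_eq, ← hMcard]
  refine le_csSup (msizes_bdd S') ⟨insert H M, ?_, ?_, ?_⟩
  · rw [Finset.coe_insert]
    exact Set.insert_subset hH (hMsub.trans hsub)
  · rw [Finset.coe_insert]
    refine Set.Pairwise.insert hMpair ?_
    intro H' hH' _
    exact ⟨hdis H' (hMsub hH'), (hdis H' (hMsub hH')).symm⟩
  · rw [Finset.card_insert_of_notMem hHM]

/-- The subfamily of hyperedges still fully available at `x`. -/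
def fam (𝓗 : Finset (Finset V)) (x : Option V → ℕ) : Set (Finset V) :=
  {H : Finset V | H ∈ 𝓗 ∧ ∀ i ∈ H, x (some i) = 1}

lemma tetris_upper (𝓗 : Finset (Finset V)) (hne : ∀ H ∈ 𝓗, H.Nonempty) :
    ∀ x : Option V → ℕ, (∀ i, x (some i) ≤ 1) →
      tetrisFun (nimMove (starE 𝓗)) x ≤ matchingNumber (fam 𝓗 x) := by
  intro x
  refine (star_wf 𝓗).induction (C := fun x => (∀ i, x (some i) ≤ 1) →
      tetrisFun (nimMove (starE 𝓗)) x ≤ matchingNumber (fam 𝓗 x)) x ?_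
  intro x ih hx1
  rw [tetrisFun_eq _ (star_wf 𝓗)]
  refine nat_sSup_le ?_
  rintro v ⟨y, hm, rfl⟩
  obtain ⟨E, ⟨H, hH𝓗, rfl⟩, hlt, heq⟩ := hm
  have hmemE : ∀ i : V, i ∈ H → (some i : Option V) ∈ insert none (H.image some) := by
    intro i hi
    exact Finset.mem_insert_of_mem (Finset.mem_image_of_mem some hi)
  have hnotE : ∀ i : V, i ∉ H → (some i : Option V) ∉ insert none (H.image some) := by
    intro i hi hmem
    rcases Finset.mem_insert.mp hmem with h | h
    · exact absurd h (Option.some_ne_none i)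
    · obtain ⟨j, hj, hji⟩ := Finset.mem_image.mp h
      rw [Option.some_inj] at hji
      subst hji
      exact hi hj
  have hyzero : ∀ i ∈ H, y (some i) = 0 := by
    intro i hi
    have := hlt (some i) (hmemE i hi)
    have := hx1 i
    omega
  have hy1 : ∀ i, y (some i) ≤ 1 := by
    intro i
    by_cases hi : i ∈ H
    · rw [hyzero i hi]; omega
    · rw [heq (some i) (hnotE i hi)]; exact hx1 i
  have h1 : tetrisFun (nimMove (starE 𝓗)) y ≤ matchingNumber (fam 𝓗 y) :=
    ih y ⟨_, ⟨H, hH𝓗, rfl⟩, hlt, heq⟩ hy1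
  have h2 : matchingNumber (fam 𝓗 y) + 1 ≤ matchingNumber (fam 𝓗 x) := by
    refine matching_step _ _ H ⟨hH𝓗, ?_⟩ (hne H hH𝓗) ?_ ?_
    · intro i hi
      have := hlt (some i) (hmemE i hi)
      have := hx1 i
      omega
    · intro H' hH'
      rw [Finset.disjoint_left]
      intro i hiH hiH'
      have := hH'.2 i hiH'
      have := hyzero i hiH
      omega
    · rintro H' ⟨hH'𝓗, hH'⟩
      refine ⟨hH'𝓗, fun i hi => ?_⟩
      by_cases hiH : i ∈ H
      · have h1 := hH' i hi
        have h2 := hyzero i hiH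
        omega
      · rw [← heq (some i) (hnotE i hiH)]
        exact hH' i hi
  omega

lemma tetris_lower (𝓗 : Finset (Finset V)) :
    ∀ (M : Finset (Finset V)) (x : Option V → ℕ),
      (↑M : Set (Finset V)) ⊆ (↑𝓗 : Set (Finset V)) →
      (↑M : Set (Finset V)).Pairwise (fun H H' => Disjoint H H') →
      (∀ H ∈ M, ∀ i ∈ H, 1 ≤ x (some i)) → M.card ≤ x none →
      M.card ≤ tetrisFun (nimMove (starE 𝓗)) x := by
  intro M
  induction M using Finset.induction_on with
  | empty => intro x _ _ _ _; simp
  | @insert H M hHM ih =>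
    intro x hsub hpair hpos hcard
    rw [Finset.card_insert_of_notMem hHM] at hcard ⊢
    set y : Option V → ℕ := fun j =>
      Option.elim j (x none - 1) (fun i => if i ∈ H then 0 else x (some i)) with hy
    have hH𝓗 : H ∈ 𝓗 := by
      have := hsub (by simp : H ∈ (↑(insert H M) : Set (Finset V)))
      simpa using this
    have hmove : nimMove (starE 𝓗) x y := by
      refine ⟨insert none (H.image some), ⟨H, hH𝓗, rfl⟩, ?_, ?_⟩
      · intro i hi
        rcases Finset.mem_insert.mp hi with h | h
        · subst h
          simp only [hy, Option.elim]
          omega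
        · obtain ⟨j, hj, rfl⟩ := Finset.mem_image.mp h
          have := hpos H (Finset.mem_insert_self _ _) j hj
          simp only [hy, Option.elim, if_pos hj]
          omega
      · intro i hi
        match i with
        | none => exact absurd (Finset.mem_insert_self _ _) hi
        | some j =>
          have hjH : j ∉ H := fun hjH =>
            hi (Finset.mem_insert_of_mem (Finset.mem_image_of_mem some hjH))
          simp only [hy, Option.elim, if_neg hjH]
    have hIH : M.card ≤ tetrisFun (nimMove (starE 𝓗)) y := by
      refine ih y ?_ ?_ ?_ ?_
      · exact fun H' hH' => hsub (by simpa using Or.inr (by simpa using hH'))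
      · exact hpair.mono (by simp [Set.subset_insert])
      · intro H' hH' i hi
        have hiH : i ∉ H := by
          have hd : Disjoint H H' := hpair (by simp) (by simp [hH'])
            (fun h => hHM (h ▸ hH'))
          exact fun hih => Finset.disjoint_left.mp hd hih hi
        simp only [hy, Option.elim, if_neg hiH]
        exact hpos H' (Finset.mem_insert_of_mem hH') i hi
      · simp only [hy, Option.elim]
        omega
    have := tetris_succ_le 𝓗 hmove
    omega

end Star

theorem stmt18 {V : Type*} [Fintype V] [DecidableEq V]
    (𝓗 : Finset (Finset V)) (hne : ∀ H ∈ 𝓗, H.Nonempty) :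
    (∀ E ∈ {E : Finset (Option V) | ∃ H ∈ 𝓗, E = insert none (H.image some)},
     ∀ E' ∈ {E : Finset (Option V) | ∃ H ∈ 𝓗, E = insert none (H.image some)},
      (E ∩ E').Nonempty) ∧
    tetrisFun
      (nimMove {E : Finset (Option V) | ∃ H ∈ 𝓗, E = insert none (H.image some)})
      (fun i => Option.elim i 𝓗.card (fun _ => 1))
      = matchingNumber (↑𝓗 : Set (Finset V)) := by
  constructor
  · rintro E ⟨H, _, rfl⟩ E' ⟨H', _, rfl⟩
    exact ⟨none, Finset.mem_inter.mpr
      ⟨Finset.mem_insert_self _ _, Finset.mem_insert_self _ _⟩⟩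
  · set x : Option V → ℕ := fun i => Option.elim i 𝓗.card (fun _ => 1) with hx
    have hEs : {E : Finset (Option V) | ∃ H ∈ 𝓗, E = insert none (H.image some)}
        = starE 𝓗 := rfl
    rw [hEs]
    have hfam : fam 𝓗 x = (↑𝓗 : Set (Finset V)) := by
      ext H
      simp [fam, hx]
    refine le_antisymm ?_ ?_
    · have := tetris_upper 𝓗 hne x (fun i => le_refl 1)
      rwa [hfam] at this
    · rw [matchingNumber_eq]
      refine csSup_le ⟨0, msizes_zero _⟩ ?_
      rintro k ⟨M, hMsub, hMpair, rfl⟩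
      refine tetris_lower 𝓗 M x hMsub hMpair (fun H _ i _ => le_refl 1) ?_
      exact Finset.card_le_card (Finset.coe_subset.mp hMsub)
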